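/- Let G be a finite simple graph and let S be any subset of V(G). Then td(G) ≤ td(G⟨S⟩) + td(G − S). -/

import Mathlib

/-- A `k`-ranking of a simple graph `G`: a labeling of the vertices with values from
`{1, …, k}` such that every path joining two distinct vertices with the same label
contains a vertex with a strictly higher label. -/
def IsRanking {V : Type*} (G : SimpleGraph V) (k : ℕ) (f : V → ℕ) : Prop :=
  (∀ v, 1 ≤ f v ∧ f v ≤ k) ∧
  ∀ ⦃u v : V⦄ (p : G.Walk u v), p.IsPath → u ≠ v → f u = f v →
    ∃ w ∈ p.support, f u < f w

/-- The tree-depth of `G`: the least `k` such that `G` admits a `k`-ranking. -/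
noncomputable def treedepth {V : Type*} (G : SimpleGraph V) : ℕ :=
  sInf {k | ∃ f, IsRanking G k f}

/-- The graph `G⟨S⟩` on vertex set `S`: distinct `u, v ∈ S` are adjacent iff they are
adjacent in `G`, or some connected component of `G − S` contains a vertex adjacent in
`G` to `u` and a vertex adjacent in `G` to `v`. -/
def closureOn {V : Type*} (G : SimpleGraph V) (S : Set V) : SimpleGraph S where
  Adj u w := u ≠ w ∧ (G.Adj u.1 w.1 ∨
    ∃ a b : ↥(Sᶜ : Set V), G.Adj a.1 u.1 ∧ G.Adj b.1 w.1 ∧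
      (G.induce (Sᶜ : Set V)).Reachable a b)
  symm := by
    constructor
    rintro u w ⟨hne, h | ⟨a, b, h1, h2, h3⟩⟩
    · exact ⟨hne.symm, Or.inl h.symm⟩
    · exact ⟨hne.symm, Or.inr ⟨b, a, h2, h1, h3.symm⟩⟩
  loopless := ⟨fun u h => h.1 rfl⟩

open SimpleGraph

lemma exists_ranking {W : Type*} [Finite W] (G : SimpleGraph W) :
    ∃ k f, IsRanking G k f := by
  obtain ⟨n, ⟨e⟩⟩ := Finite.exists_equiv_fin W
  refine ⟨n, fun v => (e v).1 + 1, fun v => ⟨Nat.le_add_left 1 _, (e v).2⟩, ?_⟩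
  intro u v p hp huv heq
  have heq' : (e u).1 + 1 = (e v).1 + 1 := heq
  exact absurd (e.injective (Fin.ext (by omega))) huv

lemma exists_induce_walk {V : Type*} (G : SimpleGraph V) (T : Set V) :
    ∀ {u v : V} (p : G.Walk u v) (hu : u ∈ T) (hv : v ∈ T),
      (∀ w ∈ p.support, w ∈ T) →
      ∃ q : (G.induce T).Walk ⟨u, hu⟩ ⟨v, hv⟩, q.support.map Subtype.val = p.support := by
  intro u v p
  induction p with
  | nil => intro hu hv _; exact ⟨.nil, rfl⟩
  | @cons a b c h p ih =>
    intro hu hv hall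
    have hb : b ∈ T := hall b (by simp [Walk.support_cons])
    obtain ⟨q, hq⟩ := ih hb hv (fun w hw => hall w (by simp [Walk.support_cons, hw]))
    exact ⟨.cons (by exact h) q, by exact congrArg (List.cons a) hq⟩

lemma closure_walk {V : Type*} (G : SimpleGraph V) (S : Set V) : ∀ n : ℕ,
    (∀ (u v : S) (p : G.Walk u.1 v.1), p.length ≤ n → p.support.Nodup →
      ∃ q : (closureOn G S).Walk u v, ∀ w ∈ q.support, (w : V) ∈ p.support) ∧
    (∀ (a v : S) (x x₀ : (Sᶜ : Set V)) (p : G.Walk x.1 v.1), p.length ≤ n →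
      p.support.Nodup → (a : V) ∉ p.support → G.Adj a x₀ →
      (G.induce (Sᶜ : Set V)).Reachable x₀ x →
      ∃ q : (closureOn G S).Walk a v, ∀ w ∈ q.support,
        (w : V) = (a : V) ∨ (w : V) ∈ p.support) := by
  intro n
  induction n with
  | zero =>
    constructor
    · rintro ⟨u, hu⟩ ⟨v, hv⟩ p hlen hnd
      cases p with
      | nil => exact ⟨Walk.nil, by simp⟩
      | cons h p' => simp [Walk.length_cons] at hlen
    · rintro ⟨a, ha⟩ ⟨v, hv⟩ ⟨x, hx⟩ x₀ p hlen hnd hanotin hadj hreach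
      cases p with
      | nil => exact absurd hv hx
      | cons h p' => simp [Walk.length_cons] at hlen
  | succ n ih =>
    obtain ⟨IHA, IHC⟩ := ih
    constructor
    · rintro ⟨u, hu⟩ ⟨v, hv⟩ p hlen hnd
      cases p with
      | nil => exact ⟨Walk.nil, by simp⟩
      | @cons _ x _ h p' =>
        rw [Walk.support_cons] at hnd
        obtain ⟨hunotin, hnd'⟩ := List.nodup_cons.mp hnd
        have hlen' : p'.length ≤ n := by simp [Walk.length_cons] at hlen; omega
        by_cases hxS : x ∈ S
        · have hne : u ≠ x := fun e => hunotin (by show u ∈ p'.support; rw [e]; exact p'.start_mem_support)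
          obtain ⟨q', hq'⟩ := IHA ⟨x, hxS⟩ ⟨v, hv⟩ p' hlen' hnd'
          refine ⟨Walk.cons (show (closureOn G S).Adj ⟨u, hu⟩ ⟨x, hxS⟩ from And.intro (fun e => hne (congrArg Subtype.val e)) (Or.inl h)) q', ?_⟩
          intro w hw
          rw [Walk.support_cons] at hw ⊢
          rcases List.mem_cons.mp hw with h1 | h1
          · simp [h1]
          · exact List.mem_cons_of_mem _ (hq' w h1)
        · obtain ⟨q, hq⟩ := IHC ⟨u, hu⟩ ⟨v, hv⟩ ⟨x, hxS⟩ ⟨x, hxS⟩ p' hlen' hnd' hunotin h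
            (Reachable.refl _)
          refine ⟨q, fun w hw => ?_⟩
          rw [Walk.support_cons]
          rcases hq w hw with h1 | h1
          · exact h1 ▸ List.mem_cons_self
          · exact List.mem_cons_of_mem _ h1
    · rintro ⟨a, ha⟩ ⟨v, hv⟩ ⟨x, hx⟩ x₀ p hlen hnd hanotin hadj hreach
      cases p with
      | nil => exact absurd hv hx
      | @cons _ y _ h p' =>
        rw [Walk.support_cons] at hnd hanotin
        obtain ⟨hxnotin, hnd'⟩ := List.nodup_cons.mp hnd
        have hanotin' : a ∉ p'.support := fun hm => hanotin (List.mem_cons_of_mem _ hm)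
        have hlen' : p'.length ≤ n := by simp [Walk.length_cons] at hlen; omega
        by_cases hyS : y ∈ S
        · have hne : a ≠ y := fun e => hanotin
            (by show a ∈ _ :: p'.support; rw [e]
                exact List.mem_cons_of_mem _ p'.start_mem_support)
          obtain ⟨q', hq'⟩ := IHA ⟨y, hyS⟩ ⟨v, hv⟩ p' hlen' hnd'
          refine ⟨Walk.cons (show (closureOn G S).Adj ⟨a, ha⟩ ⟨y, hyS⟩ from And.intro (fun e => hne (congrArg Subtype.val e))
            (Or.inr ⟨x₀, ⟨x, hx⟩, hadj.symm, h, hreach⟩)) q', ?_⟩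
          intro w hw
          rw [Walk.support_cons] at hw
          rcases List.mem_cons.mp hw with h1 | h1
          · left; rw [h1]
          · right; rw [Walk.support_cons]; exact List.mem_cons_of_mem _ (hq' w h1)
        · have hy : y ∈ (Sᶜ : Set V) := hyS
          have hadjH : (G.induce (Sᶜ : Set V)).Adj ⟨x, hx⟩ ⟨y, hy⟩ := h
          obtain ⟨q, hq⟩ := IHC ⟨a, ha⟩ ⟨v, hv⟩ ⟨y, hy⟩ x₀ p' hlen' hnd' hanotin' hadj
            (hreach.trans hadjH.reachable)
          refine ⟨q, fun w hw => ?_⟩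
          rcases hq w hw with h1 | h1
          · exact Or.inl h1
          · exact Or.inr (by rw [Walk.support_cons]; exact List.mem_cons_of_mem _ h1)

theorem treedepth_le_closureOn_add {V : Type*} [Fintype V] (G : SimpleGraph V)
    (S : Set V) :
    treedepth G ≤ treedepth (closureOn G S) + treedepth (G.induce (Sᶜ : Set V)) := by
  classical
  have hCne : {k | ∃ f, IsRanking (closureOn G S) k f}.Nonempty := by
    obtain ⟨k, f, h⟩ := exists_ranking (closureOn G S); exact ⟨k, f, h⟩
  have hHne : {k | ∃ f, IsRanking (G.induce (Sᶜ : Set V)) k f}.Nonempty := by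
    obtain ⟨k, f, h⟩ := exists_ranking (G.induce (Sᶜ : Set V)); exact ⟨k, f, h⟩
  have hfm : ∃ f, IsRanking (closureOn G S) (treedepth (closureOn G S)) f :=
    Nat.sInf_mem hCne
  have hgm : ∃ g, IsRanking (G.induce (Sᶜ : Set V))
      (treedepth (G.induce (Sᶜ : Set V))) g := Nat.sInf_mem hHne
  obtain ⟨f, hf⟩ := hfm
  obtain ⟨g, hg⟩ := hgm
  set k₁ := treedepth (closureOn G S) with hk₁
  set k₂ := treedepth (G.induce (Sᶜ : Set V)) with hk₂
  set h : V → ℕ := fun v => if hv : v ∈ S then f ⟨v, hv⟩ + k₂ else g ⟨v, hv⟩ with hdef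
  apply Nat.sInf_le
  refine ⟨h, fun v => ?_, ?_⟩
  · by_cases hv : v ∈ S
    · simp only [hdef, dif_pos hv]
      have := (hf.1 ⟨v, hv⟩)
      omega
    · simp only [hdef, dif_neg hv]
      have := (hg.1 ⟨v, hv⟩)
      omega
  · intro u v p hp huv heq
    by_cases hu : u ∈ S <;> by_cases hv : v ∈ S
    · -- both in S
      obtain ⟨q, hq⟩ := (closure_walk G S p.length).1 ⟨u, hu⟩ ⟨v, hv⟩ p le_rfl
        hp.support_nodup
      have hne' : (⟨u, hu⟩ : S) ≠ ⟨v, hv⟩ := fun e => huv (congrArg Subtype.val e)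
      have hfeq : f ⟨u, hu⟩ = f ⟨v, hv⟩ := by
        simp only [hdef, dif_pos hu, dif_pos hv] at heq; omega
      obtain ⟨w, hw, hlt⟩ := hf.2 q.bypass q.bypass_isPath hne' hfeq
      refine ⟨w.1, hq w (Walk.support_bypass_subset _ hw), ?_⟩
      simp only [hdef, dif_pos hu, dif_pos w.2]
      exact Nat.add_lt_add_right hlt k₂
    · -- u ∈ S, v ∉ S : impossible
      exfalso
      simp only [hdef, dif_pos hu, dif_neg hv] at heq
      have h1 := (hf.1 ⟨u, hu⟩).1
      have h2 := (hg.1 ⟨v, hv⟩).2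
      omega
    · exfalso
      simp only [hdef, dif_neg hu, dif_pos hv] at heq
      have h1 := (hf.1 ⟨v, hv⟩).1
      have h2 := (hg.1 ⟨u, hu⟩).2
      omega
    · -- both outside S
      by_cases hall : ∀ w ∈ p.support, w ∈ (Sᶜ : Set V)
      · obtain ⟨q, hq⟩ := exists_induce_walk G (Sᶜ : Set V) p hu hv hall
        have hqpath : q.IsPath := by
          rw [Walk.isPath_def]
          have := hp.support_nodup
          rw [← hq] at this
          exact this.of_map _
        have hne' : (⟨u, hu⟩ : (Sᶜ : Set V)) ≠ ⟨v, hv⟩ :=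
          fun e => huv (congrArg Subtype.val e)
        have hgeq : g ⟨u, hu⟩ = g ⟨v, hv⟩ := by
          simpa only [hdef, dif_neg hu, dif_neg hv] using heq
        obtain ⟨w, hw, hlt⟩ := hg.2 q hqpath hne' hgeq
        refine ⟨w.1, ?_, ?_⟩
        · rw [← hq]; exact List.mem_map_of_mem hw
        · have hwS : (w : V) ∉ S := w.2
          simp only [hdef, dif_neg hu, dif_neg hwS]
          exact hlt
      · push_neg at hall
        obtain ⟨w, hwp, hwS⟩ := hall
        have hwS' : w ∈ S := by simpa using hwS
        refine ⟨w, hwp, ?_⟩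
        simp only [hdef, dif_neg hu, dif_pos hwS']
        have h1 := (hf.1 ⟨w, hwS'⟩).1
        have h2 := (hg.1 ⟨u, hu⟩).2
        omega
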